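/- For the isotropic case λ = μ = 1 and z ∈ ℝ² with 0 < |z| < 1, let z̄ := z/|z|² be the reflection of z across the unit circle and k(x;w) := (b/2π) Jᵀ(x−w)/|x−w|² with J = [[0,1],[−1,0]]. Then for a single dislocation in the unit disk, the Peach-Köhler force j(z) := −b J k(z; z̄) equals (b²/2π) · z/(1 − |z|²); in particular it is directed radially outward and its magnitude tends to ∞ as |z| → 1⁻. -/

import Mathlib

open Filter

/-- Rotation by `−π/2`: `J v = (v₂, −v₁)`. -/
noncomputable def Jrot (v : EuclideanSpace ℝ (Fin 2)) : EuclideanSpace ℝ (Fin 2) :=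
  WithLp.toLp 2 ![v 1, -v 0]

/-- `Jᵀ v = (−v₂, v₁)`. -/
noncomputable def JTrot (v : EuclideanSpace ℝ (Fin 2)) : EuclideanSpace ℝ (Fin 2) :=
  WithLp.toLp 2 ![-(v 1), v 0]

/-- Isotropic fundamental strain `k(x;w) = (b/2π) Jᵀ(x−w)/|x−w|²`. -/
noncomputable def kIso (b : ℝ) (x w : EuclideanSpace ℝ (Fin 2)) :
    EuclideanSpace ℝ (Fin 2) :=
  (b / (2 * Real.pi) / ‖x - w‖ ^ 2) • JTrot (x - w)

/-- Peach–Köhler force on a single dislocation `z` in the unit disk: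
`j(z) = −b J k(z; z̄)` with `z̄ = z/|z|²`. -/
noncomputable def jDisk (b : ℝ) (z : EuclideanSpace ℝ (Fin 2)) :
    EuclideanSpace ℝ (Fin 2) :=
  (-b) • Jrot (kIso b z ((‖z‖ ^ 2)⁻¹ • z))

lemma JTrot_smul (c : ℝ) (v : EuclideanSpace ℝ (Fin 2)) : JTrot (c • v) = c • JTrot v := by
  ext i
  fin_cases i <;> simp [JTrot, mul_comm]

lemma Jrot_smul (c : ℝ) (v : EuclideanSpace ℝ (Fin 2)) : Jrot (c • v) = c • Jrot v := by
  ext i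
  fin_cases i <;> simp [Jrot, mul_comm]

lemma Jrot_JTrot (v : EuclideanSpace ℝ (Fin 2)) : Jrot (JTrot v) = v := by
  ext i
  fin_cases i <;> simp [Jrot, JTrot]

lemma jDisk_eq (b : ℝ) (z : EuclideanSpace ℝ (Fin 2)) (h0 : 0 < ‖z‖) (h1 : ‖z‖ < 1) :
    jDisk b z = (b ^ 2 / (2 * Real.pi) / (1 - ‖z‖ ^ 2)) • z := by
  have hz : ‖z‖ ≠ 0 := ne_of_gt h0
  have hz2 : (‖z‖ : ℝ) ^ 2 ≠ 0 := pow_ne_zero 2 hz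
  have hdiff : 1 - ‖z‖ ^ 2 ≠ 0 := by nlinarith
  have ht : (1 : ℝ) - (‖z‖ ^ 2)⁻¹ ≠ 0 := by
    field_simp
    intro h; exact hdiff (by rcases div_eq_zero_iff.mp h with h | h <;> [linarith; exact absurd h hz2])
  have hzz : z - (‖z‖ ^ 2)⁻¹ • z = (1 - (‖z‖ ^ 2)⁻¹) • z := by
    rw [sub_smul, one_smul]
  have hnorm : ‖z - (‖z‖ ^ 2)⁻¹ • z‖ ^ 2 = (1 - (‖z‖ ^ 2)⁻¹) ^ 2 * ‖z‖ ^ 2 := by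
    rw [hzz, norm_smul]
    rw [mul_pow, Real.norm_eq_abs, sq_abs]
  have hpi : Real.pi ≠ 0 := Real.pi_ne_zero
  have hdiff' : ‖z‖ ^ 2 - 1 ≠ 0 := fun h => hdiff (by linarith)
  have ht' : (1 : ℝ) - (‖z‖ ^ 2)⁻¹ = (‖z‖ ^ 2 - 1) / ‖z‖ ^ 2 := by field_simp
  unfold jDisk kIso
  rw [hnorm, hzz, JTrot_smul, smul_smul, Jrot_smul, Jrot_JTrot, smul_smul]
  congr 1
  rw [ht']
  field_simp
  ring


/-- For a single dislocation in the unit disk, `j(z) = (b²/2π) z/(1−|z|²)`: the force is a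
positive multiple of `z` (radially outward), and its magnitude blows up as `|z| → 1⁻`. -/
theorem jDisk_formula_and_blowup (b : ℝ) (hb : b ≠ 0) :
    (∀ z : EuclideanSpace ℝ (Fin 2), 0 < ‖z‖ → ‖z‖ < 1 →
      jDisk b z = (b ^ 2 / (2 * Real.pi) / (1 - ‖z‖ ^ 2)) • z ∧
      ∃ c : ℝ, 0 < c ∧ jDisk b z = c • z) ∧
    (∀ zseq : ℕ → EuclideanSpace ℝ (Fin 2),
      (∀ n, 0 < ‖zseq n‖ ∧ ‖zseq n‖ < 1) →
      Tendsto (fun n => ‖zseq n‖) atTop (nhds 1) →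
      Tendsto (fun n => ‖jDisk b (zseq n)‖) atTop atTop) := by
  have hb2 : 0 < b ^ 2 := by positivity
  have hpi : 0 < 2 * Real.pi := by positivity
  have hc : ∀ z : EuclideanSpace ℝ (Fin 2), ‖z‖ < 1 →
      0 < b ^ 2 / (2 * Real.pi) / (1 - ‖z‖ ^ 2) := by
    intro z h1
    have : 0 < 1 - ‖z‖ ^ 2 := by nlinarith [norm_nonneg z]
    positivity
  constructor
  · intro z h0 h1
    exact ⟨jDisk_eq b z h0 h1, _, hc z h1, jDisk_eq b z h0 h1⟩
  · intro zseq hseq hlim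
    have hkey : ∀ n, ‖jDisk b (zseq n)‖ =
        (b ^ 2 / (2 * Real.pi)) * (‖zseq n‖ * (1 - ‖zseq n‖ ^ 2)⁻¹) := by
      intro n
      rw [jDisk_eq b _ (hseq n).1 (hseq n).2, norm_smul, Real.norm_eq_abs,
        abs_of_pos (hc _ (hseq n).2)]
      ring
    simp only [hkey]
    have hg : Tendsto (fun n => 1 - ‖zseq n‖ ^ 2) atTop (nhdsWithin 0 (Set.Ioi 0)) := by
      apply tendsto_nhdsWithin_of_tendsto_nhds_of_eventually_within
      · have : Tendsto (fun n => 1 - ‖zseq n‖ ^ 2) atTop (nhds (1 - 1 ^ 2)) :=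
          (tendsto_const_nhds.sub (hlim.pow 2))
        simpa using this
      · filter_upwards with n
        have := (hseq n).2
        have := norm_nonneg (zseq n)
        simp only [Set.mem_Ioi]
        nlinarith
    have hinv : Tendsto (fun n => (1 - ‖zseq n‖ ^ 2)⁻¹) atTop atTop :=
      tendsto_inv_nhdsGT_zero.comp hg
    have hmul : Tendsto (fun n => ‖zseq n‖ * (1 - ‖zseq n‖ ^ 2)⁻¹) atTop atTop :=
      hlim.pos_mul_atTop one_pos hinv
    exact hmul.const_mul_atTop (by positivity)
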